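/- arXiv:1502.02288 — 6 statements merged into one kernel-verified Lean document; each statement's English description precedes it below -/
import Mathlib

section
/- Let V be a finite nonempty type, let T : SimpleGraph V be a tree, and let G be a group acting on V by graph automorphisms of T. Then either there exists a vertex v ∈ V with g · v = v for all g ∈ G, or there exists an edge {u, v} of T (so T.Adj u v) such that every g ∈ G maps the unordered pair {u, v} to itself. -/
open SimpleGraph

/-- An internal vertex of a path has two distinct neighbors. -/
lemma internal_two_neighbors {V : Type*} {T : SimpleGraph V} {u v : V} (p : T.Walk u v)
    (hp : p.IsPath) (w : V) (hw : w ∈ p.support) (hwu : w ≠ u) (hwv : w ≠ v) :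
    ∃ a b, a ≠ b ∧ T.Adj w a ∧ T.Adj w b := by
  induction p with
  | nil => simp at hw; exact absurd hw hwu
  | @cons u x v h q ih =>
    rw [SimpleGraph.Walk.support_cons, List.mem_cons] at hw
    rcases hw with rfl | hw
    · exact absurd rfl hwu
    rw [SimpleGraph.Walk.cons_isPath_iff] at hp
    by_cases hwx : w = x
    · subst hwx
      obtain ⟨y, h', q', rfl⟩ := SimpleGraph.Walk.exists_eq_cons_of_ne hwv q
      refine ⟨u, y, ?_, h.symm, h'⟩
      intro huy
      apply hp.2
      rw [huy, SimpleGraph.Walk.support_cons]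
      exact List.mem_cons_of_mem _ q'.start_mem_support
    · exact ih hp.1 hw hwx hwv

lemma reachable_induce_of_walk {V : Type*} {T : SimpleGraph V} {s : Set V} {u v : V}
    (p : T.Walk u v) (h : ∀ w ∈ p.support, w ∈ s) (hu : u ∈ s) (hv : v ∈ s) :
    (T.induce s).Reachable ⟨u, hu⟩ ⟨v, hv⟩ := by
  have conn := p.connected_induce_support
  have reach := conn ⟨u, p.start_mem_support⟩ ⟨v, p.end_mem_support⟩
  have hmap : Set.MapsTo id {w | w ∈ p.support} s := fun w hw => h w hw
  have := reach.map (SimpleGraph.induceHom (SimpleGraph.Hom.id (G := T)) hmap)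
  convert this using 2 <;> rfl

theorem aux_tree_action (n : ℕ) : ∀ (V : Type u) [Fintype V] [Nonempty V]
    (T : SimpleGraph V), T.IsTree →
    ∀ (G : Type v) [Group G] (φ : G →* Equiv.Perm V),
    (∀ (g : G) (u v : V), T.Adj (φ g u) (φ g v) ↔ T.Adj u v) →
    Fintype.card V ≤ n →
    ((∃ v : V, ∀ g : G, φ g v = v) ∨
    (∃ u v : V, T.Adj u v ∧ ∀ g : G, Sym2.map (φ g) s(u, v) = s(u, v))) := by
  induction n with
  | zero =>
    intro V _ _ T hT G _ φ hφ hcard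
    exact absurd hcard (by have := Fintype.card_pos (α := V); omega)
  | succ n ih =>
    intro V _ _ T hT G _ φ hφ hcard
    classical
    by_cases h1 : Fintype.card V = 1
    · have : Subsingleton V := Fintype.card_le_one_iff_subsingleton.mp (le_of_eq h1)
      obtain ⟨v⟩ := (inferInstance : Nonempty V)
      exact Or.inl ⟨v, fun g => Subsingleton.elim _ _⟩
    have h2 : 2 ≤ Fintype.card V := by
      have := Fintype.card_pos (α := V); omega
    -- degree is invariant under the action
    have hdeg : ∀ (g : G) (v : V), T.degree (φ g v) = T.degree v := by
      intro g v
      have himg : T.neighborFinset (φ g v) = (T.neighborFinset v).image (φ g) := by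
        ext w
        simp only [SimpleGraph.mem_neighborFinset, Finset.mem_image]
        constructor
        · intro hw
          have hw' : T.Adj (φ g v) (φ g ((φ g).symm w)) := by
            rwa [Equiv.apply_symm_apply]
          exact ⟨(φ g).symm w, (hφ g v _).mp hw', (φ g).apply_symm_apply w⟩
        · rintro ⟨x, hx, rfl⟩
          exact (hφ g v x).mpr hx
      rw [SimpleGraph.degree, SimpleGraph.degree, himg,
        Finset.card_image_of_injective _ (φ g).injective]
    set s : Set V := {v : V | 1 < T.degree v} with hs_def
    by_cases hs : s.Nonempty
    · -- induct on the subtree of internal vertices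
      have hmem : ∀ (g : G) (v : V), v ∈ s ↔ φ g v ∈ s := by
        intro g v
        simp only [hs_def, Set.mem_setOf_eq, hdeg g v]
      haveI : Nonempty ↥s := hs.to_subtype
      let φ' : G →* Equiv.Perm ↥s :=
        { toFun := fun g => Equiv.Perm.subtypePerm (φ g) (fun v => (hmem g v).symm)
          map_one' := by
            ext x
            simp [Equiv.Perm.subtypePerm_apply]
          map_mul' := by
            intro a b
            ext x
            simp [Equiv.Perm.subtypePerm_apply]; rfl }
      have hφ'app : ∀ (g : G) (x : ↥s), ((φ' g x : ↥s) : V) = φ g (x : V) := fun g x => rfl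
      have hφ' : ∀ (g : G) (u v : ↥s),
          (T.induce s).Adj (φ' g u) (φ' g v) ↔ (T.induce s).Adj u v := by
        intro g u v
        simp only [SimpleGraph.comap_adj, Function.Embedding.coe_subtype, hφ'app]
        exact hφ g u v
      have htree : (T.induce s).IsTree := by
        constructor
        · rw [SimpleGraph.connected_iff]
          refine ⟨?_, inferInstance⟩
          rintro ⟨u, hu⟩ ⟨v, hv⟩
          obtain ⟨p⟩ := hT.isConnected u v
          have hp : (p.toPath : T.Walk u v).IsPath := p.toPath.isPath
          have hsup : ∀ w ∈ (p.toPath : T.Walk u v).support, w ∈ s := by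
            intro w hw
            by_cases hwu : w = u
            · rwa [hwu]
            by_cases hwv : w = v
            · rwa [hwv]
            obtain ⟨a, b, hab, ha, hb⟩ :=
              internal_two_neighbors (p.toPath : T.Walk u v) hp w hw hwu hwv
            show 1 < T.degree w
            rw [SimpleGraph.degree]
            exact Finset.one_lt_card.mpr
              ⟨a, by simp [SimpleGraph.mem_neighborFinset, ha],
               b, by simp [SimpleGraph.mem_neighborFinset, hb], hab⟩
          exact reachable_induce_of_walk (p.toPath : T.Walk u v) hsup hu hv
        · intro v c hc
          have hinj : Function.Injective (SimpleGraph.Embedding.induce s (G := T)).toHom := by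
            intro a b hab
            exact Subtype.ext hab
          exact hT.IsAcyclic (c.map (SimpleGraph.Embedding.induce s).toHom) (hc.map hinj)
      have hleaf : ∃ x : V, x ∉ s := by
        by_contra hc
        push_neg at hc
        have hsum := T.sum_degrees_eq_twice_card_edges
        have hedge := hT.card_edgeFinset
        have hge : 2 * Fintype.card V ≤ ∑ v, T.degree v := by
          calc 2 * Fintype.card V = ∑ _v : V, 2 := by
                rw [Finset.sum_const, Finset.card_univ, smul_eq_mul, mul_comm]
            _ ≤ ∑ v, T.degree v := Finset.sum_le_sum (fun v _ => hc v)
        omega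
      obtain ⟨x, hx⟩ := hleaf
      have hlt : Fintype.card ↥s < Fintype.card V := Fintype.card_subtype_lt (x := x) hx
      rcases ih ↥s (T.induce s) htree G φ' hφ' (by omega) with ⟨v, hv⟩ | ⟨u, v, hadj, hinv⟩
      · left
        exact ⟨(v : V), fun g => congrArg Subtype.val (hv g)⟩
      · right
        refine ⟨(u : V), (v : V), hadj, ?_⟩
        intro g
        have h := hinv g
        rw [Sym2.map_pair_eq, Sym2.eq_iff] at h ⊢
        rcases h with ⟨ha, hb⟩ | ⟨ha, hb⟩
        · exact Or.inl ⟨congrArg Subtype.val ha, congrArg Subtype.val hb⟩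
        · exact Or.inr ⟨congrArg Subtype.val ha, congrArg Subtype.val hb⟩
    · -- no internal vertex: the tree is a single edge
      have hall1 : ∀ v : V, T.degree v ≤ 1 := by
        intro v
        by_contra hd
        exact hs ⟨v, Nat.lt_of_not_le hd⟩
      have hcard2 : Fintype.card V = 2 := by
        have hsum := T.sum_degrees_eq_twice_card_edges
        have hedge := hT.card_edgeFinset
        have hle : ∑ v, T.degree v ≤ Fintype.card V := by
          calc ∑ v, T.degree v ≤ ∑ _v : V, 1 := Finset.sum_le_sum (fun v _ => hall1 v)
            _ = Fintype.card V := by rw [Finset.sum_const, Finset.card_univ, smul_eq_mul, mul_one]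
        omega
      obtain ⟨u⟩ := (inferInstance : Nonempty V)
      obtain ⟨w, hw⟩ := Fintype.exists_ne_of_one_lt_card (by omega) u
      obtain ⟨p⟩ := hT.isConnected u w
      obtain ⟨x, hux, q', rfl⟩ := SimpleGraph.Walk.exists_eq_cons_of_ne (Ne.symm hw) p
      right
      refine ⟨u, x, hux, ?_⟩
      have hall : ∀ z : V, z = u ∨ z = x := by
        intro z
        by_contra hz
        push_neg at hz
        have h3 : ({z, u, x} : Finset V).card ≤ Fintype.card V := Finset.card_le_univ _
        rw [Finset.card_insert_of_notMem (by simp [hz.1, hz.2]),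
          Finset.card_insert_of_notMem (by simp [hux.ne]), Finset.card_singleton] at h3
        omega
      intro g
      rw [Sym2.map_pair_eq, Sym2.eq_iff]
      rcases hall (φ g u) with hgu | hgu
      · left
        refine ⟨hgu, ?_⟩
        rcases hall (φ g x) with hgx | hgx
        · exact absurd ((φ g).injective (hgx.trans hgu.symm)) hux.ne'
        · exact hgx
      · right
        refine ⟨hgu, ?_⟩
        rcases hall (φ g x) with hgx | hgx
        · exact hgx
        · exact absurd ((φ g).injective (hgx.trans hgu.symm)) hux.ne'

/-- **Proposition 2.1 (combinatorial form).**
If a group `G` acts on a finite nonempty tree `T` by graph automorphisms (via a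
homomorphism `φ` to the permutations of the vertices preserving adjacency), then either
some vertex is fixed by every element of `G`, or some edge `{u, v}` of `T` is mapped to
itself (as an unordered pair) by every element of `G`. -/
theorem exists_fixed_vertex_or_invariant_edge_of_tree_action
    {V : Type*} [Fintype V] [Nonempty V] (T : SimpleGraph V) (hT : T.IsTree)
    {G : Type*} [Group G] (φ : G →* Equiv.Perm V)
    (hφ : ∀ (g : G) (u v : V), T.Adj (φ g u) (φ g v) ↔ T.Adj u v) :
    (∃ v : V, ∀ g : G, φ g v = v) ∨
    (∃ u v : V, T.Adj u v ∧ ∀ g : G, Sym2.map (φ g) s(u, v) = s(u, v)) :=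
  aux_tree_action (Fintype.card V) V T hT G φ hφ le_rfl
end

section
/- Let V be a finite type and T : SimpleGraph V a tree. Call an edge e = {u, v} of T balanced if the two connected components of the graph obtained from T by deleting e (namely the component containing u and the component containing v) have equally many vertices. Then T has at most one balanced edge, and if a balanced edge e exists, then every graph automorphism of T maps the unordered pair e to itself. -/
/-- The edge `{u, v}` of a graph `T` is *balanced* if it is an edge and the two
components of `T` with this edge deleted (the one containing `u` and the one
containing `v`) have equally many vertices. -/
def IsBalancedEdge {V : Type*} [Fintype V] (T : SimpleGraph V) (u v : V) : Prop :=
  T.Adj u v ∧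
    Nat.card {w : V | (T.deleteEdges {s(u, v)}).Reachable u w} =
      Nat.card {w : V | (T.deleteEdges {s(u, v)}).Reachable v w}

open SimpleGraph

section Aux

variable {V : Type*} [Fintype V] {T : SimpleGraph V}

/-- Every vertex is reachable from one of the endpoints of a deleted edge. -/
lemma aux_reach_or (hT : T.IsTree) {u v : V} (huv : T.Adj u v) (w : V) :
    (T.deleteEdges {s(u, v)}).Reachable u w ∨ (T.deleteEdges {s(u, v)}).Reachable v w := by
  set G := T.deleteEdges {s(u, v)} with hG
  have key : ∀ (a b : V), T.Walk a b → (G.Reachable u a ∨ G.Reachable v a) →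
      (G.Reachable u b ∨ G.Reachable v b) := by
    intro a b p
    induction p with
    | nil => exact fun h => h
    | @cons x y z hxy p ih =>
      intro hx
      apply ih
      by_cases he : s(x, y) = s(u, v)
      · rw [Sym2.eq_iff] at he
        rcases he with ⟨rfl, rfl⟩ | ⟨rfl, rfl⟩
        · exact Or.inr (Reachable.refl _)
        · exact Or.inl (Reachable.refl _)
      · have hadj : G.Adj x y := by
          rw [hG, deleteEdges_adj]
          exact ⟨hxy, by simpa using he⟩
        rcases hx with h | h
        · exact Or.inl (h.trans hadj.reachable)
        · exact Or.inr (h.trans hadj.reachable)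
  obtain ⟨p⟩ := hT.isConnected.preconnected u w
  exact key u w p (Or.inl (Reachable.refl _))

/-- Deleting a tree edge separates its endpoints. -/
lemma aux_not_reach (hT : T.IsTree) {u v : V} (huv : T.Adj u v) :
    ¬ (T.deleteEdges {s(u, v)}).Reachable u v := by
  have hb := (isAcyclic_iff_forall_adj_isBridge.mp hT.IsAcyclic) huv
  rw [isBridge_iff] at hb
  exact hb

lemma aux_card_sum (hT : T.IsTree) {u v : V} (huv : T.Adj u v) :
    Nat.card {w : V | (T.deleteEdges {s(u, v)}).Reachable u w} +
      Nat.card {w : V | (T.deleteEdges {s(u, v)}).Reachable v w} = Nat.card V := by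
  set G := T.deleteEdges {s(u, v)}
  set A : Set V := {w | G.Reachable u w}
  set B : Set V := {w | G.Reachable v w}
  have hdisj : Disjoint A B := by
    rw [Set.disjoint_left]
    intro w hwA hwB
    exact aux_not_reach hT huv ((hwA : G.Reachable u w).trans (hwB : G.Reachable v w).symm)
  have hunion : A ∪ B = Set.univ := by
    ext w
    simp only [Set.mem_union, Set.mem_univ, iff_true]
    exact aux_reach_or hT huv w
  have := Set.ncard_union_eq hdisj (Set.toFinite A) (Set.toFinite B)
  rw [hunion, Set.ncard_univ] at this
  rw [Nat.card_coe_set_eq, Nat.card_coe_set_eq]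
  omega

lemma aux_balanced_symm {u v : V} (h : IsBalancedEdge T u v) : IsBalancedEdge T v u := by
  refine ⟨h.1.symm, ?_⟩
  have hswap : s(v, u) = s(u, v) := Sym2.eq_swap
  rw [hswap]
  exact h.2.symm

/-- Core combinatorial lemma: two distinct balanced edges with `u'` on `u`'s side
of the edge `{u,v}` lead to a contradiction. -/
lemma aux_key (hT : T.IsTree) {u v u' v' : V}
    (h : IsBalancedEdge T u v) (h' : IsBalancedEdge T u' v')
    (hne : s(u, v) ≠ s(u', v'))
    (hr : (T.deleteEdges {s(u, v)}).Reachable u u') : False := by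
  classical
  set G := T.deleteEdges {s(u, v)} with hGdef
  set G' := T.deleteEdges {s(u', v')} with hG'def
  have hnr : ¬ G.Reachable u v := aux_not_reach hT h.1
  have hnr' : ¬ G'.Reachable u' v' := aux_not_reach hT h'.1
  have hG'adj : G'.Adj u v := by
    rw [hG'def, deleteEdges_adj]
    exact ⟨h.1, by simpa using hne⟩
  -- every G-walk from v avoids the edge {u', v'}
  have step1 : ∀ w, G.Reachable v w → G'.Reachable v w := by
    intro w hw
    obtain ⟨p⟩ := hw
    refine ⟨p.transfer G' ?_⟩
    intro e he
    have heG : e ∈ G.edgeSet := p.edges_subset_edgeSet he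
    have heT : e ∈ T.edgeSet := edgeSet_mono (deleteEdges_le _) heG
    rw [hG'def, edgeSet_deleteEdges]
    refine ⟨heT, ?_⟩
    intro hmem
    simp only [Set.mem_singleton_iff] at hmem
    subst hmem
    have hu'sup : u' ∈ p.support := p.fst_mem_support_of_mem_edges he
    have hvu' : G.Reachable v u' := ⟨p.takeUntil u' hu'sup⟩
    exact hnr (hr.trans hvu'.symm)
  -- the relevant components
  set Cv : Set V := {w | G.Reachable v w} with hCvdef
  set Cu : Set V := {w | G.Reachable u w} with hCudef
  set Cu' : Set V := {w | G'.Reachable u w} with hCu'def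
  set Au' : Set V := {w | G'.Reachable u' w} with hAu'def
  set Av' : Set V := {w | G'.Reachable v' w} with hAv'def
  have hsub : insert u Cv ⊆ Cu' := by
    intro w hw
    rcases hw with rfl | hw
    · exact Reachable.refl _
    · exact hG'adj.reachable.trans (step1 w hw)
  have hunotmem : u ∉ Cv := fun hmem => hnr (Reachable.symm hmem)
  have hins : (insert u Cv).ncard = Cv.ncard + 1 :=
    Set.ncard_insert_of_notMem hunotmem (Set.toFinite Cv)
  have hle : (insert u Cv).ncard ≤ Cu'.ncard :=
    Set.ncard_le_ncard hsub (Set.toFinite Cu')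
  -- cardinality facts
  have hsum := aux_card_sum hT h.1
  have hsum' := aux_card_sum hT h'.1
  have hbal := h.2
  have hbal' := h'.2
  rw [← hGdef, ← hCudef, ← hCvdef, Nat.card_coe_set_eq, Nat.card_coe_set_eq]
    at hsum hbal
  rw [← hG'def, ← hAu'def, ← hAv'def, Nat.card_coe_set_eq, Nat.card_coe_set_eq]
    at hsum' hbal'
  have hCu'card : 2 * Cu'.ncard = Nat.card V := by
    rcases aux_reach_or hT h'.1 u with hu | hu
    all_goals rw [← hG'def] at hu
    · have heq : Cu' = Au' := by
        ext w
        exact ⟨fun hw => hu.trans hw, fun hw => hu.symm.trans hw⟩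
      rw [heq]; omega
    · have heq : Cu' = Av' := by
        ext w
        exact ⟨fun hw => hu.trans hw, fun hw => hu.symm.trans hw⟩
      rw [heq]; omega
  omega

/-- A graph automorphism preserves balancedness. -/
lemma aux_balanced_map (f : T ≃g T) {u v : V} (h : IsBalancedEdge T u v) :
    IsBalancedEdge T (f u) (f v) := by
  have hinj : Function.Injective f := f.toEquiv.injective
  refine ⟨f.map_adj_iff.mpr h.1, ?_⟩
  have hedge : ∀ a b : V, s(f a, f b) = s(f u, f v) ↔ s(a, b) = s(u, v) := by
    intro a b
    rw [← Sym2.map_pair_eq, ← Sym2.map_pair_eq]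
    exact (Sym2.map.injective hinj).eq_iff
  let g : (T.deleteEdges {s(u, v)}) ≃g (T.deleteEdges {s(f u, f v)}) :=
    { toEquiv := f.toEquiv
      map_rel_iff' := by
        intro a b
        simp only [Equiv.coe_fn_mk, deleteEdges_adj, Set.mem_singleton_iff]
        constructor
        · rintro ⟨h1, h2⟩
          exact ⟨f.map_adj_iff.mp h1, fun hc => h2 ((hedge a b).mpr hc)⟩
        · rintro ⟨h1, h2⟩
          exact ⟨f.map_adj_iff.mpr h1, fun hc => h2 ((hedge a b).mp hc)⟩ }
  have himg : ∀ x : V, {w | (T.deleteEdges {s(f u, f v)}).Reachable (f x) w} =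
      f '' {w | (T.deleteEdges {s(u, v)}).Reachable x w} := by
    intro x
    ext w
    constructor
    · intro hw
      refine ⟨f.symm w, ?_, f.apply_symm_apply w⟩
      have hw' : (T.deleteEdges {s(f u, f v)}).Reachable (g x) (g (f.symm w)) := by
        show (T.deleteEdges {s(f u, f v)}).Reachable (f x) (f (f.symm w))
        rwa [f.apply_symm_apply]
      exact (Iso.reachable_iff (φ := g)).mp hw'
    · rintro ⟨a, ha, rfl⟩
      exact (Iso.reachable_iff (φ := g)).mpr ha
  rw [himg u, himg v, Nat.card_coe_set_eq, Nat.card_coe_set_eq,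
    Set.ncard_image_of_injective _ hinj, Set.ncard_image_of_injective _ hinj,
    ← Nat.card_coe_set_eq, ← Nat.card_coe_set_eq]
  exact h.2

end Aux

/-- **Uniqueness and invariance of the balanced edge.**
A finite tree has at most one balanced edge, and if a balanced edge exists it is mapped
to itself (as an unordered pair) by every automorphism of the tree. -/
theorem balanced_edge_unique_and_automorphism_invariant
    {V : Type*} [Fintype V] (T : SimpleGraph V) (hT : T.IsTree) :
    (∀ u v u' v' : V, IsBalancedEdge T u v → IsBalancedEdge T u' v' →
      s(u, v) = s(u', v')) ∧
    (∀ u v : V, IsBalancedEdge T u v → ∀ f : T ≃g T, Sym2.map f s(u, v) = s(u, v)) := by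
  have huniq : ∀ u v u' v' : V, IsBalancedEdge T u v → IsBalancedEdge T u' v' →
      s(u, v) = s(u', v') := by
    intro u v u' v' h h'
    by_contra hne
    rcases aux_reach_or hT h.1 u' with hr | hr
    · exact aux_key hT h h' hne hr
    · refine aux_key hT (aux_balanced_symm h) h' ?_ ?_
      · rw [Sym2.eq_swap]; exact hne
      · show (T.deleteEdges {s(v, u)}).Reachable v u'
        rw [Sym2.eq_swap]; exact hr
  refine ⟨huniq, fun u v h f => ?_⟩
  rw [Sym2.map_pair_eq]
  exact huniq (f u) (f v) u v (aux_balanced_map f h) h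
end

section
/- Let V be a finite nonempty type and T : SimpleGraph V a tree. Suppose that no edge of T is balanced, i.e. for every edge {u, v} of T the two connected components of T with that edge deleted have different numbers of vertices. Then there exists a vertex v₀ ∈ V that is fixed by every graph automorphism of T. -/
set_option linter.unusedSectionVars false

open SimpleGraph


namespace TreeSink

variable {V : Type*} [Fintype V] {T : SimpleGraph V}

/-- Size of the component of `u` after deleting edge `{u, v}`. -/
noncomputable def c (T : SimpleGraph V) (u v : V) : ℕ :=
  Nat.card {w : V | (T.deleteEdges {s(u, v)}).Reachable u w}

lemma delete_comm (T : SimpleGraph V) (u v : V) :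
    T.deleteEdges {s(u, v)} = T.deleteEdges {s(v, u)} := by
  rw [Sym2.eq_swap]

lemma c_eq (T : SimpleGraph V) (u v : V) :
    c T v u = Nat.card {w : V | (T.deleteEdges {s(u, v)}).Reachable v w} := by
  rw [c, delete_comm T v u]

lemma not_reach_other (hT : T.IsAcyclic) {u v : V} (h : T.Adj u v) :
    ¬ (T.deleteEdges {s(u, v)}).Reachable u v := by
  have hb := (isAcyclic_iff_forall_adj_isBridge.mp hT) h
  exact isBridge_iff.mp hb

lemma walk_split (u v : V) {a b : V} (p : T.Walk a b) :
    (T.deleteEdges {s(u, v)}).Reachable a b ∨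
      ((T.deleteEdges {s(u, v)}).Reachable a u ∧ (T.deleteEdges {s(u, v)}).Reachable v b) ∨
      ((T.deleteEdges {s(u, v)}).Reachable a v ∧ (T.deleteEdges {s(u, v)}).Reachable u b) := by
  induction p with
  | nil => exact Or.inl (Reachable.refl _)
  | @cons a x b h p ih =>
    by_cases he : s(a, x) = s(u, v)
    · rcases Sym2.eq_iff.mp he with ⟨rfl, rfl⟩ | ⟨rfl, rfl⟩
      · rcases ih with r | ⟨r1, r2⟩ | ⟨r1, r2⟩
        · exact Or.inr (Or.inl ⟨Reachable.refl _, r⟩)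
        · exact Or.inr (Or.inl ⟨Reachable.refl _, r2⟩)
        · exact Or.inl r2
      · rcases ih with r | ⟨r1, r2⟩ | ⟨r1, r2⟩
        · exact Or.inr (Or.inr ⟨Reachable.refl _, r⟩)
        · exact Or.inl r2
        · exact Or.inr (Or.inr ⟨Reachable.refl _, r2⟩)
    · have hadj : (T.deleteEdges {s(u, v)}).Adj a x := by
        simp only [deleteEdges_adj, Set.mem_singleton_iff]
        exact ⟨h, he⟩
      rcases ih with r | ⟨r1, r2⟩ | ⟨r1, r2⟩
      · exact Or.inl (hadj.reachable.trans r)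
      · exact Or.inr (Or.inl ⟨hadj.reachable.trans r1, r2⟩)
      · exact Or.inr (Or.inr ⟨hadj.reachable.trans r1, r2⟩)

lemma reach_compl (hT : T.IsTree) {u v : V} (h : T.Adj u v) (w : V) :
    (T.deleteEdges {s(u, v)}).Reachable u w ↔ ¬ (T.deleteEdges {s(u, v)}).Reachable v w := by
  constructor
  · intro h1 h2
    exact not_reach_other hT.IsAcyclic h (h1.trans h2.symm)
  · intro h2
    obtain ⟨p⟩ := hT.isConnected u w
    rcases walk_split u v p with r | ⟨r1, r2⟩ | ⟨r1, r2⟩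
    · exact r
    · exact absurd r2 h2
    · exact absurd r1 (not_reach_other hT.IsAcyclic h)

lemma c_add_c (hT : T.IsTree) {u v : V} (h : T.Adj u v) :
    c T u v + c T v u = Fintype.card V := by
  rw [c, c_eq T u v, Nat.card_coe_set_eq, Nat.card_coe_set_eq]
  have hcompl : {w : V | (T.deleteEdges {s(u, v)}).Reachable v w}
      = {w : V | (T.deleteEdges {s(u, v)}).Reachable u w}ᶜ := by
    ext w
    simp only [Set.mem_compl_iff, Set.mem_setOf_eq]
    rw [reach_compl hT h w]
    tauto
  rw [hcompl, Set.ncard_add_ncard_compl, Nat.card_eq_fintype_card]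

/-- A walk avoiding some edge, whose start cannot reach `t`, also avoids every
edge incident to `t`. -/
lemma reach_avoid {e : Sym2 V} {a w t z : V}
    (hat : ¬ (T.deleteEdges {e}).Reachable a t)
    (haw : (T.deleteEdges {e}).Reachable a w) :
    (T.deleteEdges {s(t, z)}).Reachable a w := by
  classical
  obtain ⟨p⟩ := haw
  have hts : t ∉ p.support := fun ht => hat ⟨p.takeUntil t ht⟩
  refine ⟨p.transfer _ fun ed hed => ?_⟩
  have h1 := p.edges_subset_edgeSet hed
  rw [edgeSet_deleteEdges] at h1 ⊢
  refine ⟨h1.1, ?_⟩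
  simp only [Set.mem_singleton_iff]
  rintro rfl
  exact hts (p.fst_mem_support_of_mem_edges hed)

/-- Components of distinct neighbors of a common vertex are disjoint. -/
lemma comp_disjoint (hT : T.IsTree) {z p q : V} (hp : T.Adj z p) (hq : T.Adj z q)
    (hpq : p ≠ q) (w : V)
    (h1 : (T.deleteEdges {s(p, z)}).Reachable p w)
    (h2 : (T.deleteEdges {s(q, z)}).Reachable q w) : False := by
  have hpz : ¬ (T.deleteEdges {s(p, z)}).Reachable p z :=
    not_reach_other hT.IsAcyclic hp.symm
  have h1' : (T.deleteEdges {s(z, q)}).Reachable p w := reach_avoid hpz h1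
  have h2' : (T.deleteEdges {s(z, q)}).Reachable q w := by
    rw [delete_comm] at h2; exact h2
  have hadj : (T.deleteEdges {s(z, q)}).Adj z p := by
    simp only [deleteEdges_adj, Set.mem_singleton_iff]
    refine ⟨hp, fun hc => hpq ?_⟩
    exact (Sym2.congr_right.mp hc)
  have : (T.deleteEdges {s(z, q)}).Reachable z q :=
    (hadj.reachable.trans h1').trans h2'.symm
  exact not_reach_other hT.IsAcyclic hq this

lemma not_mem_comp (hT : T.IsTree) {z p : V} (hp : T.Adj z p) :
    z ∉ {w : V | (T.deleteEdges {s(p, z)}).Reachable p w} :=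
  fun hz => not_reach_other hT.IsAcyclic hp.symm hz

/-- Two distinct neighbours' component sizes together with the center are at most everything. -/
lemma c_add_c_add_one_le (hT : T.IsTree) {z p q : V} (hp : T.Adj z p) (hq : T.Adj z q)
    (hpq : p ≠ q) :
    c T p z + c T q z + 1 ≤ Fintype.card V := by
  classical
  set A := {w : V | (T.deleteEdges {s(p, z)}).Reachable p w} with hA
  set B := {w : V | (T.deleteEdges {s(q, z)}).Reachable q w} with hB
  have hdisj : Disjoint A B := by
    rw [Set.disjoint_left]
    intro w hwA hwB
    exact comp_disjoint hT hp hq hpq w hwA hwB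
  have hzA : z ∉ A := not_mem_comp hT hp
  have hzB : z ∉ B := not_mem_comp hT hq
  have hcard : (insert z (A ∪ B)).ncard ≤ Fintype.card V := by
    have h := Set.ncard_le_ncard (Set.subset_univ (insert z (A ∪ B))) Set.finite_univ
    rwa [Set.ncard_univ, Nat.card_eq_fintype_card] at h
  rw [Set.ncard_insert_of_notMem (by simp [hzA, hzB]) (Set.toFinite _),
    Set.ncard_union_eq hdisj (Set.toFinite _) (Set.toFinite _)] at hcard
  have e1 : c T p z = A.ncard := by rw [c, hA, Nat.card_coe_set_eq]
  have e2 : c T q z = B.ncard := by rw [c, hB, Nat.card_coe_set_eq]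
  omega


/-- A *sink* is a vertex all of whose neighbours' components are minorities. -/
def IsSink (T : SimpleGraph V) (v : V) : Prop :=
  ∀ u : V, T.Adj v u → 2 * c T u v < Fintype.card V

lemma exists_sink [Nonempty V] (hT : T.IsTree)
    (hnb : ∀ u v : V, ¬ IsBalancedEdge T u v) : ∃ v₀ : V, IsSink T v₀ := by
  classical
  set n := Fintype.card V with hn
  have hn1 : 1 ≤ n := Fintype.card_pos
  set M : V → ℕ := fun v => Finset.univ.sup (fun u => if T.Adj v u then c T u v else 0) with hM
  obtain ⟨v₀, -, hmin⟩ := Finset.exists_min_image Finset.univ M Finset.univ_nonempty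
  refine ⟨v₀, fun u hadj => ?_⟩
  by_contra hge
  push_neg at hge
  have hsum : c T u v₀ + c T v₀ u = n := c_add_c hT hadj.symm
  have hne : c T u v₀ ≠ Nat.card {w : V | (T.deleteEdges {s(u, v₀)}).Reachable v₀ w} := by
    intro hc
    exact hnb u v₀ ⟨hadj.symm, hc⟩
  rw [← c_eq T u v₀] at hne
  have hgt : n < 2 * c T u v₀ := by omega
  have hMv₀ : c T u v₀ ≤ M v₀ := by
    have h := Finset.le_sup (f := fun u => if T.Adj v₀ u then c T u v₀ else 0)
      (Finset.mem_univ u)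
    simp only [hM]
    simpa [hadj] using h
  have hMu : M u < c T u v₀ := by
    simp only [hM]
    rw [Finset.sup_lt_iff (by simp only [bot_eq_zero]; omega : (⊥ : ℕ) < c T u v₀)]
    intro x _
    by_cases hx : T.Adj u x
    · rw [if_pos hx]
      by_cases hxv : x = v₀
      · subst hxv; omega
      · have := c_add_c_add_one_le hT hx hadj.symm hxv
        omega
    · rw [if_neg hx]; omega
  have := hmin u (Finset.mem_univ u)
  omega

lemma exists_first_step (hT : T.IsTree) {a b : V} (hab : a ≠ b) :
    ∃ u, T.Adj a u ∧ (T.deleteEdges {s(a, u)}).Reachable u b := by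
  classical
  obtain ⟨w⟩ := hT.isConnected a b
  obtain ⟨p, hp⟩ := w.toPath
  cases p with
  | nil => exact absurd rfl hab
  | cons h q =>
    rw [SimpleGraph.Walk.cons_isPath_iff] at hp
    refine ⟨_, h, ⟨q.toDeleteEdges _ fun e he => ?_⟩⟩
    simp only [Set.mem_singleton_iff]
    rintro rfl
    exact hp.2 (q.fst_mem_support_of_mem_edges he)

lemma sink_unique (hT : T.IsTree) {a b : V}
    (ha : IsSink T a) (hb : IsSink T b) : a = b := by
  by_contra hab
  obtain ⟨u, hau, hub⟩ := exists_first_step hT hab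
  obtain ⟨u', hbu', hua⟩ := exists_first_step hT (Ne.symm hab)
  have h1 : ¬ (T.deleteEdges {s(a, u)}).Reachable a b := by
    intro hr
    exact ((reach_compl hT hau b).mp hr) hub
  have hsub : {w : V | (T.deleteEdges {s(a, u)}).Reachable a w}
      ⊆ {w : V | (T.deleteEdges {s(u', b)}).Reachable u' w} := by
    intro w hw
    have h2 : (T.deleteEdges {s(b, u')}).Reachable a w := reach_avoid h1 hw
    rw [delete_comm T b u'] at h2
    have hua' : (T.deleteEdges {s(u', b)}).Reachable u' a := by
      rw [delete_comm T u' b]; exact hua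
    exact hua'.trans h2
  have hle : c T a u ≤ c T u' b := by
    rw [c, c, Nat.card_coe_set_eq, Nat.card_coe_set_eq]
    exact Set.ncard_le_ncard hsub (Set.toFinite _)
  have hsum1 : c T u a + c T a u = Fintype.card V := c_add_c hT hau.symm
  have hs1 : 2 * c T u a < Fintype.card V := ha u hau
  have hs2 : 2 * c T u' b < Fintype.card V := hb u' hbu'
  omega

lemma reach_map (f : T ≃g T) (u v : V) {x y : V}
    (h : (T.deleteEdges {s(u, v)}).Reachable x y) :
    (T.deleteEdges {s(f u, f v)}).Reachable (f x) (f y) := by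
  have key : ∀ p q : V, (s(f p, f q) = s(f u, f v)) ↔ s(p, q) = s(u, v) := fun p q => by
    rw [← Sym2.map_pair_eq (⇑f) p q, ← Sym2.map_pair_eq (⇑f) u v]
    exact (Sym2.map.injective f.injective).eq_iff
  refine Reachable.map ⟨⇑f, fun {a b} hab => ?_⟩ h
  rw [deleteEdges_adj, Set.mem_singleton_iff] at hab ⊢
  exact ⟨f.map_adj_iff.mpr hab.1, fun hc => hab.2 ((key a b).mp hc)⟩

lemma c_map (f : T ≃g T) (u v : V) : c T (f u) (f v) = c T u v := by
  have hset : {w : V | (T.deleteEdges {s(f u, f v)}).Reachable (f u) w}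
      = f '' {w : V | (T.deleteEdges {s(u, v)}).Reachable u w} := by
    ext w
    simp only [Set.mem_setOf_eq, Set.mem_image]
    constructor
    · intro hr
      refine ⟨f.symm w, ?_, by simp⟩
      have h2 := reach_map f.symm (f u) (f v) hr
      simpa using h2
    · rintro ⟨x, hx, rfl⟩
      exact reach_map f u v hx
  rw [c, c, hset, Nat.card_coe_set_eq, Nat.card_coe_set_eq,
    Set.ncard_image_of_injective _ f.injective]

lemma isSink_map (f : T ≃g T) {v : V} (hv : IsSink T v) : IsSink T (f v) := by
  intro u hu
  have hx : T.Adj v (f.symm u) := by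
    have := f.symm.map_adj_iff.mpr hu
    simpa using this
  have := hv _ hx
  have hc : c T u (f v) = c T (f.symm u) v := by
    have := c_map f (f.symm u) v
    simpa using this
  omega

end TreeSink


/-- **The unique sink.**
If a finite nonempty tree has no balanced edge, then it has a vertex fixed by every
automorphism. -/
theorem exists_fixed_vertex_of_no_balanced_edge
    {V : Type*} [Fintype V] [Nonempty V] (T : SimpleGraph V) (hT : T.IsTree)
    (hnb : ∀ u v : V, ¬ IsBalancedEdge T u v) :
    ∃ v₀ : V, ∀ f : T ≃g T, f v₀ = v₀ := by
  obtain ⟨v₀, hv₀⟩ := TreeSink.exists_sink hT hnb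
  exact ⟨v₀, fun f => TreeSink.sink_unique hT (TreeSink.isSink_map f hv₀) hv₀⟩
end

section
/- Let V be a finite type, T : SimpleGraph V a tree, u ∈ V, and let v and w be two distinct neighbors of u in T. Let C_v be the set of vertices reachable from v in the graph obtained from T by deleting the edge {u, v}, and let C_w be the set of vertices reachable from w in the graph obtained from T by deleting the edge {u, w}. Then C_v and C_w are disjoint; in particular it is impossible that both 2·|C_v| > |V| and 2·|C_w| > |V|. -/
/-- **At most one exiting edge per vertex.**
Let `T` be a finite tree, `u` a vertex, and `v ≠ w` two neighbors of `u`.  Let `C_v` be the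
set of vertices reachable from `v` after deleting the edge `{u, v}`, and `C_w` the set of
vertices reachable from `w` after deleting the edge `{u, w}`.  Then `C_v` and `C_w` are
disjoint; in particular one cannot have both `2·|C_v| > |V|` and `2·|C_w| > |V|`. -/
theorem components_disjoint_of_two_neighbors
    {V : Type*} [Fintype V] (T : SimpleGraph V) (hT : T.IsTree)
    (u v w : V) (hvw : v ≠ w) (huv : T.Adj u v) (huw : T.Adj u w) :
    Disjoint {x : V | (T.deleteEdges {s(u, v)}).Reachable v x}
      {x : V | (T.deleteEdges {s(u, w)}).Reachable w x} ∧
    ¬ (2 * Nat.card {x : V | (T.deleteEdges {s(u, v)}).Reachable v x} > Fintype.card V ∧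
       2 * Nat.card {x : V | (T.deleteEdges {s(u, w)}).Reachable w x} > Fintype.card V) := by
  have hbr := (SimpleGraph.isAcyclic_iff_forall_adj_isBridge.mp hT.IsAcyclic)
  have hbv : ¬(T.deleteEdges {s(u, v)}).Reachable u v :=
    (SimpleGraph.isBridge_iff).mp (hbr huv)
  have hbw : ¬(T.deleteEdges {s(u, w)}).Reachable u w :=
    (SimpleGraph.isBridge_iff).mp (hbr huw)
  have hdisj : Disjoint {x : V | (T.deleteEdges {s(u, v)}).Reachable v x}
      {x : V | (T.deleteEdges {s(u, w)}).Reachable w x} := by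
    classical
    rw [Set.disjoint_left]
    rintro x hxv hxw
    simp only [Set.mem_setOf_eq] at hxv hxw
    -- get a walk q : w → x in T.deleteEdges {s(u,w)}
    obtain ⟨q⟩ := hxw
    -- u is not in the support of q (else w reaches u in T∖uw)
    have hu_not : u ∉ q.support := by
      intro hu
      exact hbw ((q.takeUntil u hu).reachable).symm
    -- so q avoids the edge s(u,v)
    have hq_avoid : s(u, v) ∉ q.edges := by
      intro he
      exact hu_not (q.fst_mem_support_of_mem_edges he)
    -- transfer q into T.deleteEdges {s(u,v)}
    have hq' : (T.deleteEdges {s(u, v)}).Reachable w x := by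
      refine ⟨q.transfer _ ?_⟩
      intro e he
      have h' := q.edges_subset_edgeSet he
      rw [SimpleGraph.edgeSet_deleteEdges, Set.mem_diff] at h'
      rw [SimpleGraph.edgeSet_deleteEdges, Set.mem_diff]
      refine ⟨h'.1, ?_⟩
      intro hmem
      rw [Set.mem_singleton_iff] at hmem
      exact hq_avoid (hmem ▸ he)
    -- u is adjacent to w in T∖uv since s(u,w) ≠ s(u,v)
    have huw' : (T.deleteEdges {s(u, v)}).Adj u w := by
      rw [SimpleGraph.deleteEdges_adj]
      refine ⟨huw, ?_⟩
      intro hmem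
      rw [Set.mem_singleton_iff, Sym2.eq_iff] at hmem
      rcases hmem with ⟨-, h⟩ | ⟨h1, -⟩
      · exact hvw h.symm
      · exact T.loopless.irrefl u (h1 ▸ huv)
    exact hbv (huw'.reachable.trans (hq'.trans hxv.symm))
  refine ⟨hdisj, ?_⟩
  rintro ⟨h1, h2⟩
  have hle : ({x : V | (T.deleteEdges {s(u, v)}).Reachable v x}.ncard +
      {x : V | (T.deleteEdges {s(u, w)}).Reachable w x}.ncard) ≤ Fintype.card V := by
    rw [← Set.ncard_union_eq hdisj (Set.toFinite _) (Set.toFinite _)]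
    calc _ ≤ (Set.univ : Set V).ncard :=
          Set.ncard_le_ncard (Set.subset_univ _) Set.finite_univ
      _ = Fintype.card V := by simp [Set.ncard_univ, Nat.card_eq_fintype_card]
  rw [Nat.card_coe_set_eq] at h1 h2
  omega
end

section
/- Let 𝔸 = (ℝ/ℤ) × [0,1] be the annulus with boundary ∂𝔸 = (ℝ/ℤ) × {0,1}. Let a, a′ ∈ ℝ and b, b′ ∈ ℝ/ℤ, and suppose the generalized Dehn twists α_{a,b} and α_{a′,b′} are homotopic rel ∂𝔸. Then a = a′ and b = b′. -/
/-- The annulus `(ℝ/ℤ) × [0,1]`. -/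
abbrev Annulus : Type := AddCircle (1 : ℝ) × unitInterval

/-- The boundary `(ℝ/ℤ) × {0,1}` of the annulus. -/
def annulusBoundary : Set Annulus := {p | p.2 = 0 ∨ p.2 = 1}

/-- The generalized Dehn twist `α_{a,b} (x, t) = (x + π(a·t) + b, t)`. -/
noncomputable def dehnTwist (a : ℝ) (b : AddCircle (1 : ℝ)) : C(Annulus, Annulus) :=
  ⟨fun p => (p.1 + ((a * (p.2 : ℝ) : ℝ) : AddCircle (1 : ℝ)) + b, p.2), by
    refine Continuous.prodMk ?_ continuous_snd
    exact ((continuous_fst.add ((AddCircle.continuous_mk' 1).comp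
      (continuous_const.mul (continuous_subtype_val.comp continuous_snd)))).add
      continuous_const)⟩

noncomputable def circleRep (x : AddCircle (1:ℝ)) : ℝ :=
  haveI : Fact ((0:ℝ) < 1) := ⟨one_pos⟩
  (AddCircle.equivIco 1 (-(2⁻¹)) x : ℝ)

lemma circleRep_coe (x : AddCircle (1:ℝ)) : ((circleRep x : ℝ) : AddCircle (1:ℝ)) = x := by
  haveI : Fact ((0:ℝ) < 1) := ⟨one_pos⟩
  exact (AddCircle.equivIco 1 (-(2⁻¹))).symm_apply_apply x

lemma circleRep_mk {r : ℝ} (h1 : -(2⁻¹) ≤ r) (h2 : r < 2⁻¹) :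
    circleRep ((r : ℝ) : AddCircle (1:ℝ)) = r := by
  haveI : Fact ((0:ℝ) < 1) := ⟨one_pos⟩
  have hr : r ∈ Set.Ico (-(2⁻¹):ℝ) (-(2⁻¹) + 1) := ⟨h1, by linarith⟩
  exact congrArg Subtype.val ((AddCircle.equivIco 1 (-(2⁻¹))).apply_symm_apply ⟨r, hr⟩)

lemma norm_half : ‖((-(2⁻¹) : ℝ) : AddCircle (1:ℝ))‖ = 2⁻¹ := by
  rw [AddCircle.norm_eq]; norm_num [round_eq]

lemma continuousAt_circleRep {x : AddCircle (1:ℝ)} (hx : ‖x‖ < 2⁻¹) :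
    ContinuousAt circleRep x := by
  haveI : Fact ((0:ℝ) < 1) := ⟨one_pos⟩
  have hne : x ≠ ((-(2⁻¹):ℝ) : AddCircle (1:ℝ)) := by
    intro hxe; rw [hxe, norm_half] at hx; exact lt_irrefl _ hx
  exact continuousAt_subtype_val.comp (AddCircle.continuousAt_equivIco 1 (-(2⁻¹)) hne)

/-- **Uniqueness part of Lemma 3.2.**
Two generalized Dehn twists which are homotopic rel boundary are equal:
if `α_{a,b}` and `α_{a',b'}` are homotopic rel `∂𝔸` then `a = a'` and `b = b'`. -/
theorem dehnTwist_homotopicRel_unique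
    (a a' : ℝ) (b b' : AddCircle (1 : ℝ))
    (h : ContinuousMap.HomotopicRel (dehnTwist a b) (dehnTwist a' b') annulusBoundary) :
    a = a' ∧ b = b' := by
  obtain ⟨H⟩ := h
  have hmem0 : ((0:AddCircle (1:ℝ)), (0:unitInterval)) ∈ annulusBoundary := Or.inl rfl
  have hmem1 : ∀ x : AddCircle (1:ℝ), (x, (1:unitInterval)) ∈ annulusBoundary :=
    fun _ => Or.inr rfl
  -- b = b'
  have hbb : b = b' := by
    have h2 := H.apply_one ((0:AddCircle (1:ℝ)), (0:unitInterval))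
    rw [H.eq_fst 1 hmem0] at h2
    have := congrArg Prod.fst h2
    simpa [dehnTwist] using this
  -- the map F
  set F : unitInterval → unitInterval → AddCircle (1:ℝ) :=
    fun s t => (H (s, ((0:AddCircle (1:ℝ)), t))).1 with hFdef
  have hFc : Continuous (fun p : unitInterval × unitInterval => F p.1 p.2) :=
    continuous_fst.comp (H.continuous.comp
      (continuous_fst.prodMk (continuous_const.prodMk continuous_snd)))
  have hFcs : ∀ t, Continuous fun s => F s t := fun t =>
    hFc.comp (continuous_id.prodMk continuous_const)
  have hF0 : ∀ t : unitInterval, F 0 t = ((a * (t:ℝ) : ℝ) : AddCircle (1:ℝ)) + b := by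
    intro t
    show (H (0, ((0:AddCircle (1:ℝ)), t))).1 = _
    rw [H.apply_zero]
    simp [dehnTwist]
  have hF1 : ∀ t : unitInterval, F 1 t = ((a' * (t:ℝ) : ℝ) : AddCircle (1:ℝ)) + b' := by
    intro t
    show (H (1, ((0:AddCircle (1:ℝ)), t))).1 = _
    rw [H.apply_one]
    simp [dehnTwist]
  have hFbot : ∀ s, F s 0 = b := by
    intro s
    show (H (s, ((0:AddCircle (1:ℝ)), 0))).1 = _
    rw [H.eq_fst s hmem0]
    simp [dehnTwist]
  have hFtop : ∀ s, F s 1 = ((a : ℝ) : AddCircle (1:ℝ)) + b := by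
    intro s
    show (H (s, ((0:AddCircle (1:ℝ)), 1))).1 = _
    rw [H.eq_fst s (hmem1 0)]
    simp [dehnTwist]
  -- uniform continuity
  have hUC := CompactSpace.uniformContinuous_of_continuous hFc
  rw [Metric.uniformContinuous_iff] at hUC
  obtain ⟨ε, hε, hUC⟩ := hUC 2⁻¹ (by norm_num)
  obtain ⟨n, hn⟩ := exists_nat_gt (max (max (2*|a|) (2*|a'|)) (1/ε))
  have hna : (n:ℝ) > 2*|a| := lt_of_le_of_lt (le_max_left _ _ |>.trans (le_max_left _ _)) hn
  have hna' : (n:ℝ) > 2*|a'| := lt_of_le_of_lt ((le_max_right _ _).trans (le_max_left _ _)) hn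
  have hnε : (n:ℝ) > 1/ε := lt_of_le_of_lt (le_max_right _ _) hn
  have hn0 : (0:ℝ) < n := lt_of_le_of_lt (by positivity) hnε
  -- subdivision points
  set T : ℕ → unitInterval := fun k =>
    ⟨min ((k:ℝ)/n) 1, le_min (by positivity) zero_le_one, min_le_right _ _⟩ with hTdef
  have hT : ∀ k ≤ n, (T k : ℝ) = (k:ℝ)/n := by
    intro k hk
    exact min_eq_left (by
      rw [div_le_one hn0]
      exact_mod_cast hk)
  have hT0 : T 0 = 0 := Subtype.ext (by simp [hTdef])
  have hTn : T n = 1 := Subtype.ext (by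
    rw [show ((T n : ℝ)) = (n:ℝ)/n from hT n le_rfl, div_self (ne_of_gt hn0)]; rfl)
  -- small differences
  set d : ℕ → unitInterval → AddCircle (1:ℝ) := fun k s => F s (T (k+1)) - F s (T k) with hddef
  have hdist : ∀ k < n, ∀ s, ‖d k s‖ < 2⁻¹ := by
    intro k hk s
    have h1 : ((T (k+1) : ℝ)) = ((k:ℝ)+1)/n := by
      rw [hT (k+1) hk]; push_cast; ring
    have h2 : ((T k : ℝ)) = (k:ℝ)/n := hT k (le_of_lt hk)
    have hdd : dist ((s, T (k+1)) : unitInterval × unitInterval) (s, T k) < ε := by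
      have h1n : 1/(n:ℝ) < ε := by
        rw [div_lt_iff₀ hn0]
        rw [gt_iff_lt, div_lt_iff₀ hε] at hnε
        linarith [hnε]
      rw [Prod.dist_eq, dist_self, Subtype.dist_eq, Real.dist_eq, h1, h2,
        show (((k:ℝ)+1)/n - (k:ℝ)/n) = 1/n by field_simp; ring,
        abs_of_nonneg (by positivity : (0:ℝ) ≤ 1/n)]
      exact max_lt hε h1n
    have := hUC hdd
    rw [show dist (F s (T (k+1))) (F s (T k)) = ‖d k s‖ from (dist_eq_norm _ _)] at this
    exact this
  -- the winding function
  set L : unitInterval → ℝ := fun s => ∑ k ∈ Finset.range n, circleRep (d k s) with hLdef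
  have hLc : Continuous L := by
    apply continuous_finset_sum
    intro k hk
    rw [continuous_iff_continuousAt]
    intro s
    have hcd : Continuous fun s => d k s :=
      (hFcs (T (k+1))).sub (hFcs (T k))
    exact (continuousAt_circleRep (hdist k (Finset.mem_range.mp hk) s)).comp hcd.continuousAt
  -- π ∘ L is constantly π a
  have hLpi : ∀ s, ((L s : ℝ) : AddCircle (1:ℝ)) = ((a:ℝ) : AddCircle (1:ℝ)) := by
    intro s
    have hmap : ((L s : ℝ) : AddCircle (1:ℝ))
        = ∑ k ∈ Finset.range n, ((circleRep (d k s) : ℝ) : AddCircle (1:ℝ)) :=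
      map_sum (QuotientAddGroup.mk' (AddSubgroup.zmultiples (1:ℝ))) _ _
    rw [hmap]
    have : ∀ k ∈ Finset.range n,
        ((circleRep (d k s) : ℝ) : AddCircle (1:ℝ)) = d k s := fun k _ => circleRep_coe _
    rw [Finset.sum_congr rfl this, hddef]
    rw [Finset.sum_range_sub (fun k => F s (T k)) n, hTn, hT0, hFtop, hFbot]
    abel
  -- value at 0 and 1
  have hstep : ∀ (c : ℝ), (n:ℝ) > 2*|c| → ∀ k < n,
      (((c * ((T (k+1)):ℝ) : ℝ) : AddCircle (1:ℝ)) + b) - (((c * ((T k):ℝ) : ℝ) : AddCircle (1:ℝ)) + b)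
        = ((c / n : ℝ) : AddCircle (1:ℝ)) := by
    intro c hc k hk
    rw [add_sub_add_right_eq_sub, ← QuotientAddGroup.mk_sub]
    congr 1
    rw [hT (k+1) hk, hT k (le_of_lt hk)]
    push_cast
    field_simp
    ring
  have habs : ∀ (c : ℝ), (n:ℝ) > 2*|c| → -(2⁻¹:ℝ) ≤ c/n ∧ c/n < 2⁻¹ := by
    intro c hc
    have : |c/n| < 2⁻¹ := by
      rw [abs_div, abs_of_nonneg (le_of_lt hn0), div_lt_iff₀ hn0]
      linarith
    rw [abs_lt] at this
    exact ⟨le_of_lt this.1, this.2⟩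
  have hLval : ∀ (c : ℝ) (β : AddCircle (1:ℝ)), (n:ℝ) > 2*|c| →
      ∀ s, (∀ t : unitInterval, F s t = ((c * (t:ℝ) : ℝ) : AddCircle (1:ℝ)) + β) → L s = c := by
    intro c β hc s hFs
    have : ∀ k ∈ Finset.range n, circleRep (d k s) = c / n := by
      intro k hk
      have hk' := Finset.mem_range.mp hk
      have hd : d k s = ((c / n : ℝ) : AddCircle (1:ℝ)) := by
        rw [hddef]
        simp only
        rw [hFs (T (k+1)), hFs (T k)]
        -- same computation as hstep but with β
        rw [add_sub_add_right_eq_sub, ← QuotientAddGroup.mk_sub]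
        congr 1
        rw [hT (k+1) hk', hT k (le_of_lt hk')]
        push_cast
        field_simp
        ring
      rw [hd, circleRep_mk (habs c hc).1 (habs c hc).2]
    rw [hLdef]
    simp only
    rw [Finset.sum_congr rfl this, Finset.sum_const, Finset.card_range, nsmul_eq_mul]
    field_simp
  have hL0 : L 0 = a := hLval a b hna 0 hF0
  have hL1 : L 1 = a' := hLval a' b' hna' 1 hF1
  -- clopen argument
  have hmemZ : ∀ s, ∃ m : ℤ, L s - a = (m : ℝ) := by
    intro s
    have := hLpi s
    rw [QuotientAddGroup.eq_iff_sub_mem] at this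
    obtain ⟨m, hm⟩ := AddSubgroup.mem_zmultiples_iff.mp this
    exact ⟨m, by rw [← hm]; simp⟩
  set S : Set unitInterval := {s | L s = a} with hSdef
  have hSclopen : IsClopen S := by
    constructor
    · exact isClosed_eq hLc continuous_const
    · rw [isOpen_iff_mem_nhds]
      intro s₀ hs₀
      have hnb : {s : unitInterval | |L s - L s₀| < 1} ∈ nhds s₀ := by
        have : Continuous fun s => |L s - L s₀| := (hLc.sub continuous_const).abs
        have h0 : |L s₀ - L s₀| < 1 := by simp
        exact (this.continuousAt (x := s₀)).preimage_mem_nhds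
          (by rw [show |L s₀ - L s₀| = 0 by simp]; exact Iio_mem_nhds one_pos)
      refine Filter.mem_of_superset hnb ?_
      intro s hs
      obtain ⟨m, hm⟩ := hmemZ s
      have hs₀' : L s₀ = a := hs₀
      have : |(m:ℝ)| < 1 := by
        rw [← hm]
        calc |L s - a| = |L s - L s₀| := by rw [hs₀']
        _ < 1 := hs
      have hm0 : m = 0 := by
        have : |m| < 1 := by exact_mod_cast this
        exact Int.abs_lt_one_iff.mp this
      show L s = a
      rw [hm0] at hm
      simp at hm
      linarith [hm]
  have hS0 : (0:unitInterval) ∈ S := hL0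
  have hSuniv : S = Set.univ := hSclopen.eq_univ ⟨0, hS0⟩
  have : (1:unitInterval) ∈ S := hSuniv ▸ Set.mem_univ _
  have haa : a = a' := by rw [← hL1]; exact (this : L 1 = a).symm
  exact ⟨haa, hbb⟩
end

section
/- Let 𝔸 = (ℝ/ℤ) × [0,1] be the annulus with boundary ∂𝔸 = (ℝ/ℤ) × {0,1}. Let f and g be homeomorphisms of 𝔸 such that for some rational points β₀, β₁, γ₀, γ₁ of ℝ/ℤ one has f(x, 0) = (x + β₀, 0), f(x, 1) = (x + β₁, 1), g(x, 0) = (x + γ₀, 0), and g(x, 1) = (x + γ₁, 1) for all x ∈ ℝ/ℤ. Then f ∘ g and g ∘ f are homotopic rel ∂𝔸. -/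
open Set AddCircle

noncomputable section AuxLemmas

/-- A continuous real-valued function on a preconnected set whose pairwise differences are
integers is constant. -/
private lemma intdiff_const {X : Type*} [TopologicalSpace X] {s : Set X}
    (hs : IsPreconnected s) {h : X → ℝ} (hc : ContinuousOn h s)
    (hint : ∀ x ∈ s, ∀ y ∈ s, ∃ n : ℤ, h x - h y = n) :
    ∀ x ∈ s, ∀ y ∈ s, h x = h y := by
  have key : ∀ x ∈ s, ∀ y ∈ s, ¬ h x < h y := by
    intro x hx y hy hlt
    have h2 : h x + 1/2 ∈ Icc (h x) (h y) := by
      obtain ⟨n, hn⟩ := hint y hy x hx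
      have h0n : (0:ℝ) < (n:ℤ) := by rw [← hn]; linarith
      have h1n : (1:ℝ) ≤ (n:ℤ) := by exact_mod_cast (by exact_mod_cast h0n : (0:ℤ) < n)
      constructor <;> linarith
    obtain ⟨z, hz, hz2⟩ := hs.intermediate_value hx hy hc h2
    obtain ⟨m, hm⟩ := hint z hz x hx
    rw [hz2] at hm
    have h2m : ((2*m : ℤ) : ℝ) = 1 := by push_cast; linarith
    have : (2*m : ℤ) = 1 := by exact_mod_cast h2m
    omega
  intro x hx y hy
  rcases lt_trichotomy (h x) (h y) with h' | h' | h'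
  · exact absurd h' (key x hx y hy)
  · exact h'
  · exact absurd h' (key y hy x hx)

/-- The section of `ℝ → ℝ/ℤ` with values in `[a, a+1)`. -/
private def sec (a : ℝ) (v : AddCircle (1:ℝ)) : ℝ := (equivIco 1 a v : ℝ)

private lemma sec_coe (a : ℝ) (v : AddCircle (1:ℝ)) : ((sec a v : ℝ) : AddCircle (1:ℝ)) = v :=
  (equivIco 1 a).symm_apply_apply v

private lemma sec_mem (a : ℝ) (v : AddCircle (1:ℝ)) : sec a v ∈ Ico a (a + 1) :=
  (equivIco 1 a v).2

private lemma sec_contAt {a : ℝ} {v : AddCircle (1:ℝ)} (hv : v ≠ (a : AddCircle (1:ℝ))) :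
    ContinuousAt (sec a) v :=
  continuous_subtype_val.continuousAt.comp (continuousAt_equivIco 1 a hv)

private lemma ne_neg_half_of_norm_lt {v : AddCircle (1:ℝ)} (hv : ‖v‖ < 1/2) :
    v ≠ ((-(1/2) : ℝ) : AddCircle (1:ℝ)) := by
  intro h
  rw [h, AddCircle.norm_eq, round_eq] at hv
  norm_num at hv

private lemma coe_sub' (r s : ℝ) :
    ((r - s : ℝ) : AddCircle (1:ℝ)) = (r : AddCircle (1:ℝ)) - (s : AddCircle (1:ℝ)) := rfl

/-- the projection `ℝ → ℝ/ℤ` is `1`-Lipschitz. -/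
private lemma dist_circle_le (x y : ℝ) :
    dist ((x : AddCircle (1:ℝ))) ((y : AddCircle (1:ℝ))) ≤ dist x y := by
  rw [dist_eq_norm, dist_eq_norm, ← coe_sub', AddCircle.norm_eq]
  have := round_le (x - y) 0
  simpa using this

/-- membership of coe in zmultiples: `(r : ℝ/ℤ) = 0` iff `r` is an integer. -/
private lemma coe_eq_zero_iff' {r : ℝ} :
    ((r : ℝ) : AddCircle (1:ℝ)) = 0 ↔ ∃ n : ℤ, (n : ℝ) = r := by
  rw [AddCircle.coe_eq_zero_iff]
  constructor
  · rintro ⟨n, hn⟩; exact ⟨n, by simpa using hn⟩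
  · rintro ⟨n, hn⟩; exact ⟨n, by simpa using hn⟩

/-- **Lifting lemma.** A continuous map from the annulus to `ℝ/ℤ` which is constant on the
bottom boundary circle lifts to a continuous real-valued map. -/
private lemma exists_annulus_lift (w : C(Annulus, AddCircle (1:ℝ)))
    (hw : ∀ x : AddCircle (1:ℝ), w (x, 0) = w (0, 0)) :
    ∃ V : C(Annulus, ℝ), ∀ p, ((V p : ℝ) : AddCircle (1:ℝ)) = w p := by
  classical
  -- the planar version of `w`
  set q : ℝ × ℝ → Annulus :=
    fun z => ((z.1 : AddCircle (1:ℝ)), projIcc 0 1 zero_le_one z.2) with hq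
  set u : ℝ × ℝ → AddCircle (1:ℝ) := fun z => w (q z) with huq
  have hq_cont : Continuous q := by
    apply Continuous.prodMk
    · exact (AddCircle.continuous_mk' (1:ℝ)).comp continuous_fst
    · exact continuous_projIcc.comp continuous_snd
  have hu_cont : Continuous u := w.continuous.comp hq_cont
  have hproj0 : projIcc (0:ℝ) 1 zero_le_one 0 = (0 : unitInterval) := by
    rw [Set.projIcc_left]
    rfl
  have hu_per : ∀ z : ℝ × ℝ, u (z.1 + 1, z.2) = u z := by
    intro z
    simp only [huq, hq, AddCircle.coe_add_period]
  have hu_bot : ∀ x x' : ℝ, u (x, 0) = u (x', 0) := by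
    intro x x'
    simp only [huq, hq, hproj0]
    rw [hw (x : AddCircle (1:ℝ)), hw (x' : AddCircle (1:ℝ))]
  -- uniform continuity modulus
  obtain ⟨δ, hδ0, hδ⟩ : ∃ δ > 0, ∀ a b : Annulus, dist a b < δ → dist (w a) (w b) < 1/2 := by
    have hUC := CompactSpace.uniformContinuous_of_continuous w.continuous
    rw [Metric.uniformContinuous_iff] at hUC
    obtain ⟨δ, hδ0, h⟩ := hUC (1/2) (by norm_num)
    exact ⟨δ, hδ0, fun a b hab => h hab⟩
  have hqdist : ∀ z z' : ℝ × ℝ, dist (q z) (q z') ≤ dist z z' := by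
    intro z z'
    rw [Prod.dist_eq, Prod.dist_eq]
    apply max_le_max
    · exact dist_circle_le _ _
    · have := (LipschitzWith.projIcc (zero_le_one : (0:ℝ) ≤ 1)).dist_le_mul z.2 z'.2
      simpa using this
  obtain ⟨n, hn⟩ := exists_nat_gt (2/δ)
  have hn0 : 0 < (n:ℝ) := lt_of_le_of_lt (by positivity) hn
  have h2n : 2/(n:ℝ) < δ := by
    rw [div_lt_iff₀ hn0]
    have h1 := (div_lt_iff₀ hδ0).mp hn
    nlinarith
  -- the explicit lift of `u`
  set S : ℝ × ℝ → ℝ := fun z =>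
    sec (-(1/2)) (u 0) + ∑ i ∈ Finset.range n,
      sec (-(1/2)) (u ((((i:ℝ)+1)/(n:ℝ)) • z) - u (((i:ℝ)/(n:ℝ)) • z)) with hS
  have coe_sum : ∀ (m : ℕ) (F : ℕ → ℝ),
      ((∑ i ∈ Finset.range m, F i : ℝ) : AddCircle (1:ℝ)) =
        ∑ i ∈ Finset.range m, ((F i : ℝ) : AddCircle (1:ℝ)) := by
    intro m F
    induction m with
    | zero => simp
    | succ k ih => rw [Finset.sum_range_succ, Finset.sum_range_succ, AddCircle.coe_add, ih]
  have hScoe : ∀ z, ((S z : ℝ) : AddCircle (1:ℝ)) = u z := by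
    intro z
    simp only [hS]
    rw [AddCircle.coe_add, coe_sum]
    simp only [sec_coe]
    have htel := Finset.sum_range_sub (fun i : ℕ => u (((i:ℝ)/(n:ℝ)) • z)) n
    simp only [Nat.cast_add, Nat.cast_one] at htel
    rw [htel]
    rw [div_self hn0.ne', one_smul]
    simp only [Nat.cast_zero, zero_div, zero_smul]
    abel
  -- continuity on the region of interest
  have hSca : ∀ z : ℝ × ℝ, ‖z‖ ≤ 3/2 → ContinuousAt S z := by
    intro z hz
    have hterm : ∀ i : ℕ, ContinuousAt
        (fun z' => sec (-(1/2)) (u ((((i:ℝ)+1)/(n:ℝ)) • z') - u (((i:ℝ)/(n:ℝ)) • z'))) z := by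
      intro i
      have hinner : Continuous
          (fun z' : ℝ × ℝ => u ((((i:ℝ)+1)/(n:ℝ)) • z') - u (((i:ℝ)/(n:ℝ)) • z')) :=
        (hu_cont.comp (continuous_const_smul _)).sub (hu_cont.comp (continuous_const_smul _))
      have hzn : ‖z‖/(n:ℝ) < δ := by
        rw [div_lt_iff₀ hn0]
        have h1 := (div_lt_iff₀ hδ0).mp hn
        nlinarith
      have hdist : dist ((((i:ℝ)+1)/(n:ℝ)) • z) ((((i:ℝ))/(n:ℝ)) • z) < δ := by
        rw [dist_eq_norm, ← sub_smul]
        have harith : (((i:ℝ)+1)/(n:ℝ) - ((i:ℝ))/(n:ℝ)) = 1/(n:ℝ) := by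
          field_simp
          ring
        rw [harith, norm_smul, Real.norm_eq_abs, abs_of_pos (by positivity)]
        calc 1/(n:ℝ) * ‖z‖ = ‖z‖/(n:ℝ) := by ring
          _ < δ := hzn
      have hnorm : ‖u ((((i:ℝ)+1)/(n:ℝ)) • z) - u (((i:ℝ)/(n:ℝ)) • z)‖ < 1/2 := by
        rw [← dist_eq_norm]
        simp only [huq]
        exact hδ _ _ (lt_of_le_of_lt (hqdist _ _) hdist)
      exact ContinuousAt.comp (g := sec (-(1/2)))
        (f := fun z' : ℝ × ℝ => u ((((i:ℝ)+1)/(n:ℝ)) • z') - u (((i:ℝ)/(n:ℝ)) • z'))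
        (sec_contAt (ne_neg_half_of_norm_lt hnorm)) hinner.continuousAt
    simp only [hS]
    exact ContinuousAt.add continuousAt_const (tendsto_finset_sum _ (fun i _ => hterm i))
  -- points in the bottom edge give equal values of `u`, hence lifts differ by integers
  have hSint : ∀ z z' : ℝ × ℝ, u z = u z' → ∃ k : ℤ, S z - S z' = k := by
    intro z z' huz
    have : ((S z - S z' : ℝ) : AddCircle (1:ℝ)) = 0 := by
      rw [coe_sub', hScoe, hScoe, huz, sub_self]
    obtain ⟨k, hk⟩ := coe_eq_zero_iff'.mp this
    exact ⟨k, hk.symm⟩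
  -- constancy on the bottom edge
  have hbot_const : ∀ x ∈ Icc (0:ℝ) 1, ∀ y ∈ Icc (0:ℝ) 1, S (x, 0) = S (y, 0) := by
    apply intdiff_const isPreconnected_Icc
    · intro x hx
      apply ContinuousAt.continuousWithinAt
      have hnx : ‖((x, (0:ℝ)) : ℝ × ℝ)‖ ≤ 3/2 := by
        rw [Prod.norm_def]
        apply max_le
        · rw [Real.norm_eq_abs, abs_of_nonneg hx.1]; linarith [hx.2]
        · norm_num
      exact ContinuousAt.comp (g := S) (f := fun x : ℝ => ((x, (0:ℝ)) : ℝ × ℝ))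
        (hSca (x, 0) hnx) ((continuous_id.prodMk continuous_const).continuousAt)
    · intro x _ y _
      exact hSint _ _ (hu_bot x y)
  have hS10 : S (1, 0) = S (0, 0) :=
    hbot_const 1 (by norm_num) 0 (by norm_num)
  -- the shift-by-one relation, on the strip `[0, 1/2] × [0, 1]`
  have hper : ∀ z : ℝ × ℝ, z ∈ Icc (0:ℝ) (1/2) ×ˢ Icc (0:ℝ) 1 → S (z.1 + 1, z.2) = S z := by
    have hconst : ∀ z ∈ Icc (0:ℝ) (1/2) ×ˢ Icc (0:ℝ) 1,
        ∀ z' ∈ Icc (0:ℝ) (1/2) ×ˢ Icc (0:ℝ) 1,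
        (fun z : ℝ × ℝ => S (z.1 + 1, z.2) - S z) z
          = (fun z : ℝ × ℝ => S (z.1 + 1, z.2) - S z) z' := by
      apply intdiff_const (isPreconnected_Icc.prod isPreconnected_Icc)
      · intro z hz
        obtain ⟨hz1, hz2⟩ := hz
        apply ContinuousAt.continuousWithinAt
        have hnz : ‖z‖ ≤ 3/2 := by
          rw [Prod.norm_def]
          apply max_le
          · rw [Real.norm_eq_abs, abs_of_nonneg hz1.1]; linarith [hz1.2]
          · rw [Real.norm_eq_abs, abs_of_nonneg hz2.1]; linarith [hz2.2]
        have hnz' : ‖((z.1 + 1, z.2) : ℝ × ℝ)‖ ≤ 3/2 := by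
          rw [Prod.norm_def]
          dsimp only
          apply max_le
          · rw [Real.norm_eq_abs,
              abs_of_nonneg (show (0:ℝ) ≤ z.1 + 1 by linarith [hz1.1])]
            linarith [hz1.2]
          · rw [Real.norm_eq_abs, abs_of_nonneg hz2.1]; linarith [hz2.2]
        apply ContinuousAt.sub
        · exact ContinuousAt.comp (g := S)
            (f := fun z : ℝ × ℝ => ((z.1 + 1, z.2) : ℝ × ℝ)) (hSca _ hnz')
            (((continuous_fst.add continuous_const).prodMk continuous_snd)).continuousAt
        · exact hSca z hnz
      · intro z _ z' _
        have e1 : ∃ k : ℤ, S (z.1 + 1, z.2) - S z = k :=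
          hSint _ _ (hu_per z)
        have e2 : ∃ k : ℤ, S (z'.1 + 1, z'.2) - S z' = k :=
          hSint _ _ (hu_per z')
        obtain ⟨k1, hk1⟩ := e1; obtain ⟨k2, hk2⟩ := e2
        exact ⟨k1 - k2, by push_cast; linarith⟩
    intro z hz
    have h00 : ((0:ℝ), (0:ℝ)) ∈ Icc (0:ℝ) (1/2) ×ˢ Icc (0:ℝ) 1 := by
      constructor <;> norm_num
    have := hconst z hz _ h00
    simp only at this
    rw [zero_add] at this
    have : S (z.1 + 1, z.2) - S z = S (1, 0) - S (0, 0) := this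
    rw [hS10] at this
    linarith
  -- the descended map
  set V : Annulus → ℝ := fun p => S (sec 0 p.1, (p.2 : ℝ)) with hV
  have hVcoe : ∀ p : Annulus, ((V p : ℝ) : AddCircle (1:ℝ)) = w p := by
    intro p
    simp only [hV]
    rw [hScoe]
    simp only [huq, hq]
    rw [sec_coe]
    congr 1
    rw [Set.projIcc_of_mem _ p.2.2]
  -- relation between the two sections
  have hsecrel : ∀ v : AddCircle (1:ℝ),
      sec (1/2) v = sec 0 v ∨ (sec (1/2) v = sec 0 v + 1 ∧ sec 0 v < 1/2) := by
    intro v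
    have hm0 := sec_mem 0 v
    have hm2 := sec_mem (1/2) v
    rw [zero_add] at hm0
    have hdiffcoe : ((sec (1/2) v - sec 0 v : ℝ) : AddCircle (1:ℝ)) = 0 := by
      rw [coe_sub', sec_coe, sec_coe, sub_self]
    obtain ⟨k, hk⟩ := coe_eq_zero_iff'.mp hdiffcoe
    have hk0 : (-1:ℝ) < k := by
      rw [hk]
      have h1 := hm2.1; have h2 := hm0.2; linarith
    have hk1 : (k:ℝ) < 2 := by
      rw [hk]
      have h1 := hm2.2; have h2 := hm0.1; linarith
    have hk0' : (-1:ℤ) < k := by exact_mod_cast hk0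
    have hk1' : (k:ℤ) < 2 := by exact_mod_cast hk1
    interval_cases k
    · left
      have hd0 : sec (1/2) v - sec 0 v = 0 := by rw [← hk]; norm_num
      linarith
    · right
      have hd1 : sec (1/2) v - sec 0 v = 1 := by rw [← hk]; norm_num
      constructor
      · linarith
      · have h1 := hm2.2; linarith
  have hV' : V = fun p => S (sec (1/2) p.1, (p.2 : ℝ)) := by
    funext p
    simp only [hV]
    rcases hsecrel p.1 with h | ⟨h, hlt⟩
    · rw [h]
    · rw [h]
      have hmem : ((sec 0 p.1, (p.2 : ℝ)) : ℝ × ℝ) ∈ Icc (0:ℝ) (1/2) ×ˢ Icc (0:ℝ) 1 := by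
        refine ⟨⟨(sec_mem 0 p.1).1, le_of_lt hlt⟩, ⟨p.2.2.1, p.2.2.2⟩⟩
      exact (hper _ hmem).symm
  -- continuity of V
  have hVcont : Continuous V := by
    rw [continuous_iff_continuousAt]
    intro p
    by_cases hp : p.1 = ((0:ℝ) : AddCircle (1:ℝ))
    · -- use the 1/2-section near the seam
      rw [hV']
      have hne : p.1 ≠ (((1:ℝ)/2 : ℝ) : AddCircle (1:ℝ)) := by
        rw [hp]
        intro h
        have : (((1:ℝ)/2 - 0 : ℝ) : AddCircle (1:ℝ)) = 0 := by
          rw [coe_sub', ← h, sub_self]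
        obtain ⟨k, hk⟩ := coe_eq_zero_iff'.mp this
        norm_num at hk
        have : (2*k : ℤ) = 1 := by exact_mod_cast (by push_cast; linarith : ((2*k : ℤ):ℝ) = 1)
        omega
      have hsca : ContinuousAt S (sec (1/2) p.1, (p.2 : ℝ)) := by
        apply hSca
        rw [Prod.norm_def]
        have hm := sec_mem (1/2) p.1
        apply max_le
        · rw [Real.norm_eq_abs, abs_of_nonneg (by linarith [hm.1])]
          have := hm.2; norm_num at this ⊢; linarith
        · rw [Real.norm_eq_abs, abs_of_nonneg p.2.2.1]; linarith [p.2.2.2]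
      exact ContinuousAt.comp (g := S)
        (f := fun p : Annulus => ((sec (1/2) p.1, (p.2 : ℝ)) : ℝ × ℝ)) hsca
        (ContinuousAt.prodMk
          (ContinuousAt.comp (g := sec (1/2)) (f := Prod.fst) (sec_contAt hne)
            continuousAt_fst)
          (continuous_subtype_val.comp continuous_snd).continuousAt)
    · have hsca : ContinuousAt S (sec 0 p.1, (p.2 : ℝ)) := by
        apply hSca
        rw [Prod.norm_def]
        have hm := sec_mem 0 p.1
        rw [zero_add] at hm
        apply max_le
        · rw [Real.norm_eq_abs, abs_of_nonneg hm.1]; linarith [hm.2]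
        · rw [Real.norm_eq_abs, abs_of_nonneg p.2.2.1]; linarith [p.2.2.2]
      exact ContinuousAt.comp (g := S)
        (f := fun p : Annulus => ((sec 0 p.1, (p.2 : ℝ)) : ℝ × ℝ)) hsca
        (ContinuousAt.prodMk
          (ContinuousAt.comp (g := sec 0) (f := Prod.fst) (sec_contAt hp)
            continuousAt_fst)
          (continuous_subtype_val.comp continuous_snd).continuousAt)
  exact ⟨⟨V, hVcont⟩, hVcoe⟩

/-- Constancy of a lift along a horizontal circle on which the lifted map is constant. -/
private lemma lift_const_on_level (V : C(Annulus, ℝ)) (j : unitInterval)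
    (c : AddCircle (1:ℝ)) (hc : ∀ x : AddCircle (1:ℝ), ((V (x, j) : ℝ) : AddCircle (1:ℝ)) = c) :
    ∀ x y : AddCircle (1:ℝ), V (x, j) = V (y, j) := by
  have hpre : IsPreconnected (univ : Set (AddCircle (1:ℝ))) := isPreconnected_univ
  have := intdiff_const (s := (univ : Set (AddCircle (1:ℝ)))) hpre
    (h := fun x => V (x, j)) ?_ ?_
  · intro x y
    exact this x (mem_univ x) y (mem_univ y)
  · exact (V.continuous.comp (continuous_id.prodMk continuous_const)).continuousOn
  · intro x _ y _
    have : ((V (x, j) - V (y, j) : ℝ) : AddCircle (1:ℝ)) = 0 := by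
      rw [coe_sub', hc, hc, sub_self]
    obtain ⟨k, hk⟩ := coe_eq_zero_iff'.mp this
    exact ⟨k, hk.symm⟩

end AuxLemmas

/-- **Commutativity up to isotopy rel boundary (consequence of Lemma 3.2).**
If `f` and `g` are homeomorphisms of the annulus which restrict to rational rotations on
the two boundary circles, then `f ∘ g` and `g ∘ f` are homotopic rel `∂𝔸`. -/
theorem comp_homotopicRel_comm_of_boundary_rotations
    (f g : Annulus ≃ₜ Annulus) (β₀ β₁ γ₀ γ₁ : AddCircle (1 : ℝ))
    (hβ₀ : ∃ q : ℚ, β₀ = ((q : ℝ) : AddCircle (1 : ℝ)))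
    (hβ₁ : ∃ q : ℚ, β₁ = ((q : ℝ) : AddCircle (1 : ℝ)))
    (hγ₀ : ∃ q : ℚ, γ₀ = ((q : ℝ) : AddCircle (1 : ℝ)))
    (hγ₁ : ∃ q : ℚ, γ₁ = ((q : ℝ) : AddCircle (1 : ℝ)))
    (hf0 : ∀ x : AddCircle (1 : ℝ), f (x, 0) = (x + β₀, 0))
    (hf1 : ∀ x : AddCircle (1 : ℝ), f (x, 1) = (x + β₁, 1))
    (hg0 : ∀ x : AddCircle (1 : ℝ), g (x, 0) = (x + γ₀, 0))
    (hg1 : ∀ x : AddCircle (1 : ℝ), g (x, 1) = (x + γ₁, 1)) :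
    ContinuousMap.HomotopicRel
      ((f : C(Annulus, Annulus)).comp (g : C(Annulus, Annulus)))
      ((g : C(Annulus, Annulus)).comp (f : C(Annulus, Annulus)))
      annulusBoundary := by
  classical
  -- the "rotation number" maps of f and g
  set wf : C(Annulus, AddCircle (1:ℝ)) :=
    ⟨fun p => (f p).1 - p.1,
      ((continuous_fst.comp f.continuous).sub continuous_fst)⟩ with hwf
  set wg : C(Annulus, AddCircle (1:ℝ)) :=
    ⟨fun p => (g p).1 - p.1,
      ((continuous_fst.comp g.continuous).sub continuous_fst)⟩ with hwg
  have hwf_bot : ∀ x : AddCircle (1:ℝ), wf (x, 0) = wf (0, 0) := by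
    intro x
    simp only [hwf, ContinuousMap.coe_mk]
    rw [hf0, hf0]
    simp
  have hwg_bot : ∀ x : AddCircle (1:ℝ), wg (x, 0) = wg (0, 0) := by
    intro x
    simp only [hwg, ContinuousMap.coe_mk]
    rw [hg0, hg0]
    simp
  obtain ⟨Vf, hVf⟩ := exists_annulus_lift wf hwf_bot
  obtain ⟨Vg, hVg⟩ := exists_annulus_lift wg hwg_bot
  have hVf' : ∀ p : Annulus, ((Vf p : ℝ) : AddCircle (1:ℝ)) = (f p).1 - p.1 := hVf
  have hVg' : ∀ p : Annulus, ((Vg p : ℝ) : AddCircle (1:ℝ)) = (g p).1 - p.1 := hVg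
  -- constancy of the lifts on the two boundary circles
  have hVf0 : ∀ x y : AddCircle (1:ℝ), Vf (x, 0) = Vf (y, 0) := by
    apply lift_const_on_level Vf 0 β₀
    intro x
    rw [hVf']
    rw [hf0]
    simp
  have hVf1 : ∀ x y : AddCircle (1:ℝ), Vf (x, 1) = Vf (y, 1) := by
    apply lift_const_on_level Vf 1 β₁
    intro x
    rw [hVf']
    rw [hf1]
    simp
  have hVg0 : ∀ x y : AddCircle (1:ℝ), Vg (x, 0) = Vg (y, 0) := by
    apply lift_const_on_level Vg 0 γ₀
    intro x
    rw [hVg']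
    rw [hg0]
    simp
  have hVg1 : ∀ x y : AddCircle (1:ℝ), Vg (x, 1) = Vg (y, 1) := by
    apply lift_const_on_level Vg 1 γ₁
    intro x
    rw [hVg']
    rw [hg1]
    simp
  -- the "difference of twists" function
  set D : Annulus → ℝ := fun p => Vf p + Vg (f p) - Vg p - Vf (g p) with hD
  have hDcont : Continuous D := by
    simp only [hD]
    exact ((Vf.continuous.add (Vg.continuous.comp f.continuous)).sub
      Vg.continuous).sub (Vf.continuous.comp g.continuous)
  have hDcoe : ∀ p : Annulus, ((D p : ℝ) : AddCircle (1:ℝ)) = (g (f p)).1 - (f (g p)).1 := by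
    intro p
    simp only [hD]
    rw [coe_sub', coe_sub', AddCircle.coe_add, hVf', hVg', hVg', hVf']
    abel
  -- D vanishes on the boundary, and second coordinates agree there
  have hbdryf : ∀ p : Annulus, p ∈ annulusBoundary →
      D p = 0 ∧ (f (g p)).2 = (g (f p)).2 := by
    rintro ⟨x, j⟩ hj
    rcases hj with hj | hj <;> simp only at hj <;> subst hj
    · constructor
      · simp only [hD]
        rw [hf0, hg0, hVg0 (x + β₀) x, hVf0 (x + γ₀) x]
        ring
      · rw [hf0, hg0, hg0 (x + β₀), hf0 (x + γ₀)]
    · constructor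
      · simp only [hD]
        rw [hf1, hg1, hVg1 (x + β₁) x, hVf1 (x + γ₁) x]
        ring
      · rw [hf1, hg1, hg1 (x + β₁), hf1 (x + γ₁)]
  -- second coordinate of the homotopy
  have hmem : ∀ (t : unitInterval) (p : Annulus),
      (1 - (t:ℝ)) * ((f (g p)).2 : ℝ) + (t:ℝ) * ((g (f p)).2 : ℝ) ∈ Icc (0:ℝ) 1 := by
    intro t p
    have ht := t.2
    have ha := (f (g p)).2.2
    have hb := (g (f p)).2.2
    simp only [mem_Icc] at *
    constructor
    · have h1 : 0 ≤ (1 - (t:ℝ)) * ((f (g p)).2 : ℝ) := by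
        apply mul_nonneg <;> [linarith [ht.2]; exact ha.1]
      have h2 : 0 ≤ (t:ℝ) * ((g (f p)).2 : ℝ) := mul_nonneg ht.1 hb.1
      linarith
    · nlinarith [ht.1, ht.2, ha.1, ha.2, hb.1, hb.2]
  -- build the homotopy
  refine ⟨{
    toFun := fun q =>
      ((f (g q.2)).1 + (((q.1:ℝ) * D q.2 : ℝ) : AddCircle (1:ℝ)),
        ⟨(1 - (q.1:ℝ)) * ((f (g q.2)).2 : ℝ) + (q.1:ℝ) * ((g (f q.2)).2 : ℝ), hmem q.1 q.2⟩)
    continuous_toFun := ?_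
    map_zero_left := ?_
    map_one_left := ?_
    prop' := ?_ }⟩
  · -- continuity
    apply Continuous.prodMk
    · apply Continuous.add
      · exact continuous_fst.comp (f.continuous.comp (g.continuous.comp continuous_snd))
      · exact (AddCircle.continuous_mk' (1:ℝ)).comp
          ((continuous_subtype_val.comp continuous_fst).mul (hDcont.comp continuous_snd))
    · apply Continuous.subtype_mk
      apply Continuous.add
      · exact (continuous_const.sub (continuous_subtype_val.comp continuous_fst)).mul
          (continuous_subtype_val.comp
            (continuous_snd.comp (f.continuous.comp (g.continuous.comp continuous_snd))))
      · exact (continuous_subtype_val.comp continuous_fst).mul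
          (continuous_subtype_val.comp
            (continuous_snd.comp (g.continuous.comp (f.continuous.comp continuous_snd))))
  · -- at time 0
    intro p
    simp only [ContinuousMap.comp_apply, ContinuousMap.coe_coe]
    apply Prod.ext
    · show (f (g p)).1 + ((((0:unitInterval):ℝ) * D p : ℝ) : AddCircle (1:ℝ)) = (f (g p)).1
      rw [Set.Icc.coe_zero, zero_mul]
      rw [show (((0:ℝ)) : AddCircle (1:ℝ)) = 0 from rfl, add_zero]
    · apply Subtype.ext
      show (1 - ((0:unitInterval):ℝ)) * ((f (g p)).2 : ℝ)
          + ((0:unitInterval):ℝ) * ((g (f p)).2 : ℝ) = ((f (g p)).2 : ℝ)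
      rw [Set.Icc.coe_zero]
      ring
  · -- at time 1
    intro p
    simp only [ContinuousMap.comp_apply, ContinuousMap.coe_coe]
    apply Prod.ext
    · show (f (g p)).1 + ((((1:unitInterval):ℝ) * D p : ℝ) : AddCircle (1:ℝ)) = (g (f p)).1
      rw [Set.Icc.coe_one, one_mul, hDcoe]
      abel
    · apply Subtype.ext
      show (1 - ((1:unitInterval):ℝ)) * ((f (g p)).2 : ℝ)
          + ((1:unitInterval):ℝ) * ((g (f p)).2 : ℝ) = ((g (f p)).2 : ℝ)
      rw [Set.Icc.coe_one]
      ring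
  · -- rel boundary
    intro t p hp
    obtain ⟨hD0, h2⟩ := hbdryf p hp
    simp only [ContinuousMap.coe_mk, ContinuousMap.comp_apply, ContinuousMap.coe_coe]
    apply Prod.ext
    · show (f (g p)).1 + (((t:ℝ) * D p : ℝ) : AddCircle (1:ℝ)) = (f (g p)).1
      rw [hD0, mul_zero]
      rw [show (((0:ℝ)) : AddCircle (1:ℝ)) = 0 from rfl, add_zero]
    · apply Subtype.ext
      show (1 - (t:ℝ)) * ((f (g p)).2 : ℝ) + (t:ℝ) * ((g (f p)).2 : ℝ) = ((f (g p)).2 : ℝ)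
      rw [← h2]
      ring
end
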